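/- Fix a positive integer d and v ∈ I(d). Let 𝔖 be a monomial in N(v) and x an element of I(d,2d) with x ≥ v. Then x dominates 𝔖 if and only if for every α = (r,c) in 𝔖 there exists β = (R,C) in 𝔖_x with C ≤ c, r ≤ R, and the depth of β in 𝔖_x at least the depth of α in 𝔖. -/

import Mathlib

namespace OG

/-- `star d k = k* = 2d+1-k`. -/
def star (d k : ℕ) : ℕ := 2 * d + 1 - k

/-- `I(d,2d)`: the set of `d`-element subsets of `{1,…,2d}`. -/
def Idn (d : ℕ) : Set (Finset ℕ) :=
  {v | v.card = d ∧ ∀ k ∈ v, 1 ≤ k ∧ k ≤ 2 * d}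

/-- The partial order on `I(d,2d)`: entrywise comparison of increasing enumerations. -/
def leI (x y : Finset ℕ) : Prop :=
  List.Forall₂ (· ≤ ·) (x.sort (· ≤ ·)) (y.sort (· ≤ ·))

/-- `I(d)`: elements of `I(d,2d)` containing exactly one of `k`, `k*` for each `k`,
with evenly many entries exceeding `d`. -/
def Iset (d : ℕ) : Set (Finset ℕ) :=
  {v | v ∈ Idn d ∧ (∀ k, 1 ≤ k → k ≤ 2 * d → (k ∈ v ↔ star d k ∉ v)) ∧
       Even ((v.filter (fun k => d < k)).card)}

/-- membership in `N(v)`. -/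
def inN (d : ℕ) (v : Finset ℕ) (p : ℕ × ℕ) : Prop :=
  1 ≤ p.1 ∧ p.1 ≤ 2 * d ∧ 1 ≤ p.2 ∧ p.2 ≤ 2 * d ∧ p.1 ∉ v ∧ p.2 ∈ v ∧ p.2 < p.1

/-- membership in `OR(v)`. -/
def inOR (d : ℕ) (v : Finset ℕ) (p : ℕ × ℕ) : Prop :=
  1 ≤ p.1 ∧ p.1 ≤ 2 * d ∧ 1 ≤ p.2 ∧ p.2 ≤ 2 * d ∧ p.1 ∉ v ∧ p.2 ∈ v ∧ p.1 < star d p.2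

/-- membership in `ON(v) = OR(v) ∩ N(v)`. -/
def inON (d : ℕ) (v : Finset ℕ) (p : ℕ × ℕ) : Prop := inN d v p ∧ inOR d v p

/-- membership in the diagonal `D(v)`. -/
def inDiag (d : ℕ) (v : Finset ℕ) (p : ℕ × ℕ) : Prop :=
  p.1 ∉ v ∧ p.2 ∈ v ∧ p.1 = star d p.2

instance (d : ℕ) (v : Finset ℕ) : DecidablePred (inN d v) := fun p => by
  unfold inN; infer_instance

instance (d : ℕ) (v : Finset ℕ) : DecidablePred (inOR d v) := fun p => by
  unfold inOR; infer_instance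

instance (d : ℕ) (v : Finset ℕ) : DecidablePred (inON d v) := fun p => by
  unfold inON; infer_instance

instance (d : ℕ) (v : Finset ℕ) : DecidablePred (inDiag d v) := fun p => by
  unfold inDiag; infer_instance

/-- `(R,C) > (r,c)` iff `R > r` and `C < c`. -/
def pgt (A B : ℕ × ℕ) : Prop := B.1 < A.1 ∧ A.2 < B.2

instance : DecidableRel pgt := fun A B => by unfold pgt; infer_instance

/-- `(R,C)` dominates `(r,c)` iff `R ≥ r` and `C ≤ c`. -/
def pdom (A B : ℕ × ℕ) : Prop := B.1 ≤ A.1 ∧ A.2 ≤ B.2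

/-- vertical projection `p_v(r,c) = (c*,c)`. -/
def pv (d : ℕ) (α : ℕ × ℕ) : ℕ × ℕ := (star d α.2, α.2)

/-- horizontal projection `p_h(r,c) = (r,r*)`. -/
def ph (d : ℕ) (α : ℕ × ℕ) : ℕ × ℕ := (α.1, star d α.1)

/-- `(r,c)^# = (c*,r*)`. -/
def hash (d : ℕ) (α : ℕ × ℕ) : ℕ × ℕ := (star d α.2, star d α.1)

/-- A `v`-chain: a strictly decreasing (under `pgt`) list of elements of `ON(v)`. -/
def IsVChain (d : ℕ) (v : Finset ℕ) (C : List (ℕ × ℕ)) : Prop :=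
  C.Chain' pgt ∧ ∀ α ∈ C, inON d v α

/-- Two consecutive elements `(r,c) > (R,C)` of a `v`-chain are connected
if `r* ≥ C` and `R > r*`. -/
def Connected (d : ℕ) (α β : ℕ × ℕ) : Prop :=
  β.2 ≤ star d α.1 ∧ star d α.1 < β.1

instance (d : ℕ) : ∀ α β, Decidable (Connected d α β) := fun α β => by
  unfold Connected; infer_instance

/-- The connected components of a `v`-chain. -/
def components (d : ℕ) (C : List (ℕ × ℕ)) : List (List (ℕ × ℕ)) :=
  C.splitBy (fun a b => decide (Connected d a b))

/-- The three possible types of an element of a `v`-chain. -/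
inductive VType | V | H | S
deriving DecidableEq

/-- The type of an element `α` of a `v`-chain `C`: type V if `α` is not the last element
of its connected component or that component has even cardinality; otherwise type H if
`p_h(α) ∈ N(v)` (i.e. `r > r*`) and type S if not. -/
def typeOf (d : ℕ) (C : List (ℕ × ℕ)) (α : ℕ × ℕ) : VType :=
  match (components d C).find? (fun g => decide (α ∈ g)) with
  | some g =>
      if g.getLast? = some α ∧ Odd g.length then
        (if star d α.1 < α.1 then VType.H else VType.S)
      else VType.V
  | none => VType.V

/-- `𝔖_{C,α}`. -/
def SCa (d : ℕ) (C : List (ℕ × ℕ)) (α : ℕ × ℕ) : Multiset (ℕ × ℕ) :=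
  match typeOf d C α with
  | VType.V => {pv d α}
  | VType.H => {pv d α, ph d α}
  | VType.S => {α, hash d α}

/-- `𝔖_C`: the multiset union of the `𝔖_{C,α}` over `α ∈ C`. -/
def SC (d : ℕ) (C : List (ℕ × ℕ)) : Multiset (ℕ × ℕ) :=
  (C.map (fun α => SCa d C α)).sum

/-- `q_{C,α}`. -/
def qCa (d : ℕ) (C : List (ℕ × ℕ)) (α : ℕ × ℕ) : ℕ × ℕ :=
  match typeOf d C α with
  | VType.S => α
  | _ => pv d α

/-- A strictly decreasing chain of elements of the monomial `S`. -/
def IsChainIn (S : Multiset (ℕ × ℕ)) (L : List (ℕ × ℕ)) : Prop :=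
  L.Chain' pgt ∧ ∀ β ∈ L, β ∈ S

/-- The depth of `α` in a monomial `S` of `N(v)`: the maximal length of a strictly
decreasing chain of elements of `S` ending at `α`. -/
noncomputable def depth (S : Multiset (ℕ × ℕ)) (α : ℕ × ℕ) : ℕ :=
  sSup {k | ∃ L, IsChainIn S L ∧ L.getLast? = some α ∧ L.length = k}

/-- The o-depth of `α` in a `v`-chain `C`: the depth of `q_{C,α}` in `𝔖_C`. -/
noncomputable def odepthC (d : ℕ) (C : List (ℕ × ℕ)) (α : ℕ × ℕ) : ℕ :=
  depth (SC d C) (qCa d C α)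

/-- The o-depth of `α` in a monomial `S` of `ON(v)`: the maximum of `odepthC` over
all `v`-chains in `S` containing `α`. -/
noncomputable def odepthM (d : ℕ) (v : Finset ℕ) (S : Multiset (ℕ × ℕ)) (α : ℕ × ℕ) : ℕ :=
  sSup {k | ∃ C, IsVChain d v C ∧ (∀ β ∈ C, β ∈ S) ∧ α ∈ C ∧ odepthC d C α = k}

/-- A distinguished subset of `N(v)`. -/
def Distinguished (d : ℕ) (v : Finset ℕ) (S : Finset (ℕ × ℕ)) : Prop :=
  (∀ p ∈ S, inN d v p) ∧
  ∀ A ∈ S, ∀ B ∈ S, A ≠ B →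
    A.1 ≠ B.1 ∧ A.2 ≠ B.2 ∧ (B.1 < A.1 → (B.1 < A.2 ∨ A.2 < B.2))

/-- The element of `I(d,2d)` attached to a distinguished subset `S` of `N(v)`:
remove from `v` the column indices of elements of `S` and add their row indices. -/
def toW (v : Finset ℕ) (S : Finset (ℕ × ℕ)) : Finset ℕ :=
  (v \ S.image Prod.snd) ∪ S.image Prod.fst

/-- `w(C) = w_C`, the element of `I(d,2d)` attached to the `v`-chain `C` via the
distinguished subset `𝔖_C`. -/
def wC (d : ℕ) (v : Finset ℕ) (C : List (ℕ × ℕ)) : Finset ℕ :=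
  toW v (SC d C).toFinset

/-- `w` ortho-dominates a monomial `S` in `ON(v)`: `w ≥ w(C)` for every `v`-chain
`C` contained in `S`. -/
def ODominates (d : ℕ) (v w : Finset ℕ) (S : Multiset (ℕ × ℕ)) : Prop :=
  ∀ C : List (ℕ × ℕ), IsVChain d v C → (∀ β ∈ C, β ∈ S) → leI (wC d v C) w

/-- `x` dominates a monomial `S` in `N(v)` (in the sense of the Grassmannian case):
`x ≥ w_L` for every strictly decreasing chain `L` contained in `S`. -/
def Dominates (d : ℕ) (v x : Finset ℕ) (S : Multiset (ℕ × ℕ)) : Prop :=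
  ∀ L : List (ℕ × ℕ), L.Chain' pgt → (∀ β ∈ L, β ∈ S) → leI (toW v L.toFinset) x

/-- The `v`-degree of `θ`: half the cardinality of `v \ θ`. -/
def vdeg (v θ : Finset ℕ) : ℕ := (v \ θ).card / 2

/-- the element next to `α` in the list `C`. -/
def nextInC (C : List (ℕ × ℕ)) (α : ℕ × ℕ) : Option (ℕ × ℕ) :=
  C[C.idxOf α + 1]?

/-- The critical element of a `v`-chain: its first element whose horizontal projection
does not belong to `N(v)` (i.e. with `r ≤ r*`). -/
def critical (d : ℕ) (C : List (ℕ × ℕ)) : Option (ℕ × ℕ) :=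
  C.find? (fun x => decide (x.1 ≤ star d x.1))

/-- `α` is the last element of its connected component in `C`. -/
def isCompLast (d : ℕ) (C : List (ℕ × ℕ)) (α : ℕ × ℕ) : Prop :=
  ∃ g ∈ components d C, g.getLast? = some α

/-- The condition (*): `α` has type H in `C` and `p_h(α) ≯ β'` for some `β' ∈ 𝔖_{C,β}`. -/
def starCond (d : ℕ) (C : List (ℕ × ℕ)) (α β : ℕ × ℕ) : Prop :=
  typeOf d C α = VType.H ∧ ∃ β' ∈ SCa d C β, ¬ pgt (ph d α) β'

/-- A standard monomial in `I(d)`: a weakly decreasing sequence of elements of `I(d)`. -/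
def IsStdMon (d : ℕ) (L : List (Finset ℕ)) : Prop :=
  (∀ θ ∈ L, θ ∈ Iset d) ∧ L.Chain' (fun a b => leI b a)

/-- A standard monomial is `w`-dominated if `w ≥ θ₁`. -/
def WDominated (w : Finset ℕ) (L : List (Finset ℕ)) : Prop :=
  ∀ θ, L.head? = some θ → leI θ w

/-- A standard monomial is `v`-compatible if each member is comparable with `v`
and distinct from `v`. -/
def VCompatible (v : Finset ℕ) (L : List (Finset ℕ)) : Prop :=
  ∀ θ ∈ L, θ ≠ v ∧ (leI θ v ∨ leI v θ)

/-- The degree of a standard monomial: the sum of the `v`-degrees of its members. -/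
def stdDeg (v : Finset ℕ) (L : List (Finset ℕ)) : ℕ :=
  (L.map (fun θ => vdeg v θ)).sum

end OG

namespace OG

instance : IsTrans (ℕ × ℕ) pgt :=
  ⟨fun _ _ _ h1 h2 => ⟨h2.1.trans h1.1, h1.2.trans h2.2⟩⟩

lemma pgt_irrefl (A : ℕ × ℕ) : ¬ pgt A A := fun h => lt_irrefl _ h.1

lemma chain_pairwise {L : List (ℕ × ℕ)} (h : L.Chain' pgt) : L.Pairwise pgt :=
  List.isChain_iff_pairwise.mp h

lemma chain_nodup {L : List (ℕ × ℕ)} (h : L.Chain' pgt) : L.Nodup :=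
  (chain_pairwise h).imp (fun hab => by rintro rfl; exact pgt_irrefl _ hab)

lemma pairwise_mem_or {α : Type*} {R : α → α → Prop} {L : List α} (h : L.Pairwise R)
    {a b : α} (ha : a ∈ L) (hb : b ∈ L) (hne : a ≠ b) : R a b ∨ R b a := by
  have h' : L.Pairwise (fun a b => R a b ∨ R b a) := h.imp Or.inl
  letI : Std.Symm (fun a b => R a b ∨ R b a) := ⟨fun _ _ hxy => hxy.symm⟩
  exact h'.forall ha hb hne

lemma pairwise_rel_getLast {α : Type*} {R : α → α → Prop} {L : List α} (h : L.Pairwise R)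
    {a : α} (hl : L.getLast? = some a) {γ : α} (hγ : γ ∈ L) : γ = a ∨ R γ a := by
  induction L with
  | nil => simp at hγ
  | cons c L ih =>
    cases L with
    | nil => simp at hl hγ; subst hl; left; simpa using hγ
    | cons e M =>
      rw [List.getLast?_cons_cons] at hl
      rcases List.mem_cons.mp hγ with rfl | hγ
      · right
        exact (List.pairwise_cons.mp h).1 a
          (List.mem_of_mem_getLast? (by rw [hl]; simp))
      · exact ih (List.pairwise_cons.mp h).2 hl hγ

/-- count of elements `≥ t` -/
def cnt (y : Finset ℕ) (t : ℕ) : ℕ := (y.filter (fun k => t ≤ k)).card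

lemma countP_sort (y : Finset ℕ) (t : ℕ) :
    (y.sort (· ≤ ·)).countP (fun k => decide (t ≤ k)) = cnt y t := by
  have h1 : (y.sort (· ≤ ·)).countP (fun k => decide (t ≤ k))
      = y.toList.countP (fun k => decide (t ≤ k)) :=
    (Finset.sort_perm_toList _ _).countP_eq _
  rw [h1, cnt]
  have h2 : Multiset.countP (fun k => t ≤ k) y.val
      = List.countP (fun k => decide (t ≤ k)) y.toList := by
    rw [← Finset.coe_toList y, Multiset.coe_countP]
  rw [← h2, Finset.card_def, Finset.filter_val, Multiset.countP_eq_card_filter]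

lemma forall₂_countP {a b : List ℕ} (h : List.Forall₂ (· ≤ ·) a b) (t : ℕ) :
    a.countP (fun k => decide (t ≤ k)) ≤ b.countP (fun k => decide (t ≤ k)) := by
  induction h with
  | nil => simp
  | @cons p q l₁ l₂ hab _ ih =>
    rw [List.countP_cons, List.countP_cons]
    by_cases h1 : t ≤ p <;> by_cases h2 : t ≤ q <;> simp [h1, h2] <;> omega

lemma sorted_le_of_countP {a b : List ℕ} (hsa : a.Pairwise (· ≤ ·)) (hsb : b.Pairwise (· ≤ ·))
    (hlen : a.length = b.length)
    (hc : ∀ t, a.countP (fun k => decide (t ≤ k)) ≤ b.countP (fun k => decide (t ≤ k))) :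
    List.Forall₂ (· ≤ ·) a b := by
  rw [List.forall₂_iff_get]
  refine ⟨hlen, fun i h₁ h₂ => ?_⟩
  by_contra hlt
  push_neg at hlt
  obtain ⟨t, ht⟩ : ∃ t, t = a.get ⟨i, h₁⟩ := ⟨_, rfl⟩
  rw [← ht] at hlt
  have hca : a.length - i ≤ a.countP (fun k => decide (t ≤ k)) := by
    have hall : (a.drop i).countP (fun k => decide (t ≤ k))
        = (a.drop i).length := by
      rw [List.countP_eq_length]
      intro z hz
      obtain ⟨⟨j, hj⟩, rfl⟩ := List.mem_iff_get.mp hz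
      have hj' : i + j < a.length := by rw [List.length_drop] at hj; omega
      have hget : (a.drop i).get ⟨j, hj⟩ = a.get ⟨i + j, hj'⟩ := by
        simp [List.get_eq_getElem, List.getElem_drop]
      rw [hget]
      simp only [decide_eq_true_eq]
      rw [ht]
      exact hsa.rel_get_of_le (by simp only [Fin.mk_le_mk]; omega)
    have hsplit : a.countP (fun k => decide (t ≤ k))
        = (a.take i).countP (fun k => decide (t ≤ k)) + (a.drop i).countP (fun k => decide (t ≤ k)) := by
      conv_lhs => rw [← List.take_append_drop i a]
      rw [List.countP_append]
    rw [hsplit, hall, List.length_drop]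
    omega
  have hcb : b.countP (fun k => decide (t ≤ k)) ≤ b.length - (i + 1) := by
    have htake : (b.take (i+1)).countP (fun k => decide (t ≤ k)) = 0 := by
      rw [List.countP_eq_zero]
      intro z hz
      obtain ⟨⟨j, hj⟩, rfl⟩ := List.mem_iff_get.mp hz
      have hjlen : j < b.length := lt_of_lt_of_le hj (by simp [List.length_take])
      have hji : j ≤ i := by rw [List.length_take] at hj; omega
      have hget : (b.take (i+1)).get ⟨j, hj⟩ = b.get ⟨j, hjlen⟩ := by
        simp [List.get_eq_getElem, List.getElem_take]
      rw [hget]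
      simp only [decide_eq_true_eq, not_le]
      have hmono : b.get ⟨j, hjlen⟩ ≤ b.get ⟨i, h₂⟩ :=
        hsb.rel_get_of_le (by simp only [Fin.mk_le_mk]; omega)
      omega
    have hsplit : b.countP (fun k => decide (t ≤ k))
        = (b.take (i+1)).countP (fun k => decide (t ≤ k)) + (b.drop (i+1)).countP (fun k => decide (t ≤ k)) := by
      conv_lhs => rw [← List.take_append_drop (i+1) b]
      rw [List.countP_append]
    have hdrop : (b.drop (i+1)).countP (fun k => decide (t ≤ k))
        ≤ b.length - (i+1) := by
      calc (b.drop (i+1)).countP (fun k => decide (t ≤ k)) ≤ (b.drop (i+1)).length :=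
            List.countP_le_length
        _ = b.length - (i+1) := List.length_drop
    omega
  have := hc t
  omega

lemma leI_iff_cnt {y x : Finset ℕ} (h : y.card = x.card) :
    leI y x ↔ ∀ t, cnt y t ≤ cnt x t := by
  constructor
  · intro hle t
    rw [← countP_sort, ← countP_sort]
    exact forall₂_countP hle t
  · intro hc
    refine sorted_le_of_countP (Finset.pairwise_sort _ _) (Finset.pairwise_sort _ _) ?_ ?_
    · rw [Finset.length_sort, Finset.length_sort, h]
    · intro t; rw [countP_sort, countP_sort]; exact hc t

/-- interval covering number of a point `t` by a set of pairs -/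
def cov (F : Finset (ℕ × ℕ)) (t : ℕ) : ℕ :=
  (F.filter (fun α => α.2 < t ∧ t ≤ α.1)).card

section
variable {v : Finset ℕ} {F : Finset (ℕ × ℕ)}
variable (hcol : ∀ α ∈ F, α.2 ∈ v) (hrow : ∀ α ∈ F, α.1 ∉ v)
variable (hlt : ∀ α ∈ F, α.2 < α.1)
variable (hinj1 : Set.InjOn Prod.fst (F : Set (ℕ × ℕ)))
variable (hinj2 : Set.InjOn Prod.snd (F : Set (ℕ × ℕ)))

include hcol hrow hinj1 hinj2 in
lemma card_toW : (toW v F).card = v.card := by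
  have hsub : F.image Prod.snd ⊆ v := by
    intro c hc; obtain ⟨α, hα, rfl⟩ := Finset.mem_image.mp hc; exact hcol α hα
  have hdisj : Disjoint (v \ F.image Prod.snd) (F.image Prod.fst) := by
    rw [Finset.disjoint_right]
    intro r hr hrv
    obtain ⟨α, hα, rfl⟩ := Finset.mem_image.mp hr
    exact hrow α hα (Finset.mem_sdiff.mp hrv).1
  rw [toW, Finset.card_union_of_disjoint hdisj, Finset.card_sdiff_of_subset hsub,
    Finset.card_image_of_injOn hinj1, Finset.card_image_of_injOn hinj2]
  have := Finset.card_le_card hsub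
  rw [Finset.card_image_of_injOn hinj2] at this
  omega

include hcol hrow hinj1 hinj2 in
lemma cnt_toW_aux (t : ℕ) :
    cnt (toW v F) t + (F.filter (fun α => t ≤ α.2)).card
      = cnt v t + (F.filter (fun α => t ≤ α.1)).card := by
  classical
  have hfilt_sdiff : (v \ F.image Prod.snd).filter (fun k => t ≤ k)
      = v.filter (fun k => t ≤ k) \ (F.image Prod.snd).filter (fun k => t ≤ k) := by
    ext k; simp only [Finset.mem_filter, Finset.mem_sdiff]; tauto
  have hsub2 : (F.image Prod.snd).filter (fun k => t ≤ k) ⊆ v.filter (fun k => t ≤ k) := by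
    intro c hc
    rw [Finset.mem_filter] at hc ⊢
    obtain ⟨α, hα, rfl⟩ := Finset.mem_image.mp hc.1
    exact ⟨hcol α hα, hc.2⟩
  have hdisj : Disjoint ((v \ F.image Prod.snd).filter (fun k => t ≤ k))
      ((F.image Prod.fst).filter (fun k => t ≤ k)) := by
    rw [Finset.disjoint_right]
    intro r hr hrv
    rw [Finset.mem_filter] at hr hrv
    obtain ⟨α, hα, rfl⟩ := Finset.mem_image.mp hr.1
    exact hrow α hα (Finset.mem_sdiff.mp hrv.1).1
  have himg2 : (F.image Prod.snd).filter (fun k => t ≤ k)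
      = (F.filter (fun α => t ≤ α.2)).image Prod.snd := Finset.filter_image
  have himg1 : (F.image Prod.fst).filter (fun k => t ≤ k)
      = (F.filter (fun α => t ≤ α.1)).image Prod.fst := Finset.filter_image
  have hc2 : ((F.image Prod.snd).filter (fun k => t ≤ k)).card
      = (F.filter (fun α => t ≤ α.2)).card := by
    rw [himg2]
    exact Finset.card_image_of_injOn (hinj2.mono (by rw [Finset.coe_filter]; intro z hz; exact hz.1))
  have hc1 : ((F.image Prod.fst).filter (fun k => t ≤ k)).card
      = (F.filter (fun α => t ≤ α.1)).card := by
    rw [himg1]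
    exact Finset.card_image_of_injOn (hinj1.mono (by rw [Finset.coe_filter]; intro z hz; exact hz.1))
  have key : cnt (toW v F) t = cnt v t - ((F.image Prod.snd).filter (fun k => t ≤ k)).card
      + ((F.image Prod.fst).filter (fun k => t ≤ k)).card := by
    rw [cnt, toW, Finset.filter_union, Finset.card_union_of_disjoint hdisj, hfilt_sdiff,
      Finset.card_sdiff_of_subset hsub2]
    rfl
  have hle := Finset.card_le_card hsub2
  rw [hc2] at hle
  have hle' : (F.filter (fun α => t ≤ α.2)).card ≤ cnt v t := hle
  rw [key, hc1, hc2]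
  omega

include hlt in
lemma card_filter_fst_eq (t : ℕ) :
    (F.filter (fun α => t ≤ α.1)).card
      = (F.filter (fun α => t ≤ α.2)).card + cov F t := by
  classical
  have hpart := Finset.card_filter_add_card_filter_not
    (s := F.filter (fun α => t ≤ α.1)) (fun α => t ≤ α.2)
  have h1 : (F.filter (fun α => t ≤ α.1)).filter (fun α => t ≤ α.2)
      = F.filter (fun α => t ≤ α.2) := by
    rw [Finset.filter_filter]
    apply Finset.filter_congr
    intro α hα
    have := hlt α hα
    constructor <;> intro h <;> omega
  have h2 : (F.filter (fun α => t ≤ α.1)).filter (fun α => ¬ t ≤ α.2)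
      = F.filter (fun α => α.2 < t ∧ t ≤ α.1) := by
    rw [Finset.filter_filter]
    ext α
    simp only [Finset.mem_filter]
    constructor <;> rintro ⟨h1, h2⟩ <;> exact ⟨h1, by omega⟩
  rw [h1, h2] at hpart
  rw [cov]
  omega

include hcol hrow hlt hinj1 hinj2 in
lemma cnt_toW (t : ℕ) : cnt (toW v F) t = cnt v t + cov F t := by
  have h1 := cnt_toW_aux hcol hrow hinj1 hinj2 t
  have h2 := card_filter_fst_eq hlt t
  omega

end

lemma chain_length_le {S : Multiset (ℕ × ℕ)} {L : List (ℕ × ℕ)} (h : IsChainIn S L) :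
    L.length ≤ S.toFinset.card := by
  classical
  have hnd : L.Nodup := chain_nodup h.1
  have hsub : L.toFinset ⊆ S.toFinset := by
    intro γ hγ
    rw [List.mem_toFinset] at hγ
    exact Multiset.mem_toFinset.mpr (h.2 γ hγ)
  calc L.length = L.toFinset.card := (List.toFinset_card_of_nodup hnd).symm
    _ ≤ S.toFinset.card := Finset.card_le_card hsub

lemma depth_bddAbove (S : Multiset (ℕ × ℕ)) (α : ℕ × ℕ) :
    BddAbove {k | ∃ L, IsChainIn S L ∧ L.getLast? = some α ∧ L.length = k} := by
  refine ⟨S.toFinset.card, fun k hk => ?_⟩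
  obtain ⟨L, hL, _, rfl⟩ := hk
  exact chain_length_le hL

lemma le_depth {S : Multiset (ℕ × ℕ)} {L : List (ℕ × ℕ)} {α : ℕ × ℕ}
    (h : IsChainIn S L) (hl : L.getLast? = some α) : L.length ≤ depth S α :=
  le_csSup (depth_bddAbove S α) ⟨L, h, hl, rfl⟩

lemma depth_le {S : Multiset (ℕ × ℕ)} {α : ℕ × ℕ} {n : ℕ}
    (h : ∀ L, IsChainIn S L → L.getLast? = some α → L.length ≤ n) : depth S α ≤ n := by
  rw [depth]
  rcases Set.eq_empty_or_nonempty {k | ∃ L, IsChainIn S L ∧ L.getLast? = some α ∧ L.length = k}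
    with he | hne
  · rw [he, csSup_empty]; exact Nat.zero_le n
  · exact csSup_le hne (fun k ⟨L, hL, hl, hk⟩ => hk ▸ h L hL hl)

lemma single_chain {S : Multiset (ℕ × ℕ)} {α : ℕ × ℕ} (hα : α ∈ S) : IsChainIn S [α] :=
  ⟨List.isChain_singleton α, by simpa using hα⟩

lemma one_le_depth {S : Multiset (ℕ × ℕ)} {α : ℕ × ℕ} (hα : α ∈ S) : 1 ≤ depth S α := by
  simpa using le_depth (single_chain hα) (List.getLast?_singleton)

lemma depth_attained {S : Multiset (ℕ × ℕ)} {α : ℕ × ℕ} (hα : α ∈ S) :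
    ∃ L, IsChainIn S L ∧ L.getLast? = some α ∧ L.length = depth S α := by
  have hne : Set.Nonempty {k | ∃ L, IsChainIn S L ∧ L.getLast? = some α ∧ L.length = k} :=
    ⟨1, [α], single_chain hα, List.getLast?_singleton, rfl⟩
  exact Nat.sSup_mem hne (depth_bddAbove S α)

lemma depth_le_cov {G : Finset (ℕ × ℕ)} {β : ℕ × ℕ} {t : ℕ}
    (h2 : β.2 < t) (h1 : t ≤ β.1) : depth G.val β ≤ cov G t := by
  classical
  apply depth_le
  intro L hL hlast
  have hnd : L.Nodup := chain_nodup hL.1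
  have hsub : L.toFinset ⊆ G.filter (fun α => α.2 < t ∧ t ≤ α.1) := by
    intro γ hγ
    rw [List.mem_toFinset] at hγ
    have hγG : γ ∈ G := Finset.mem_val.mp (hL.2 γ hγ)
    rcases pairwise_rel_getLast (chain_pairwise hL.1) hlast hγ with rfl | hrel
    · exact Finset.mem_filter.mpr ⟨hγG, h2, h1⟩
    · refine Finset.mem_filter.mpr ⟨hγG, ?_, ?_⟩
      · exact lt_trans hrel.2 h2
      · exact le_trans h1 (le_of_lt hrel.1)
  calc L.length = L.toFinset.card := (List.toFinset_card_of_nodup hnd).symm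
    _ ≤ _ := Finset.card_le_card hsub

lemma exists_deep_of_cov {S : Multiset (ℕ × ℕ)} {L : List (ℕ × ℕ)} {t : ℕ}
    (hL : IsChainIn S L) (hpos : 0 < cov L.toFinset t) :
    ∃ α ∈ L, α.2 < t ∧ t ≤ α.1 ∧ cov L.toFinset t ≤ depth S α := by
  classical
  have hnd : L.Nodup := chain_nodup hL.1
  set P := L.filter (fun γ => decide (γ.2 < t ∧ t ≤ γ.1)) with hP
  have hPnd : P.Nodup := List.filter_sublist.nodup hnd
  have hcovP : cov L.toFinset t = P.length := by
    rw [cov]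
    have : L.toFinset.filter (fun α => α.2 < t ∧ t ≤ α.1) = P.toFinset := by
      rw [hP, List.toFinset_filter]
      apply Finset.filter_congr
      intro γ _
      simp
    rw [this, List.toFinset_card_of_nodup hPnd]
  have hPne : P ≠ [] := by
    intro h
    rw [hcovP, h] at hpos
    simp at hpos
  set α := P.getLast hPne with hα
  have hαP : α ∈ P := List.getLast_mem hPne
  have hαL : α ∈ L := (List.mem_filter.mp hαP).1
  have hprop : α.2 < t ∧ t ≤ α.1 := by
    have := (List.mem_filter.mp hαP).2
    simpa using this
  refine ⟨α, hαL, hprop.1, hprop.2, ?_⟩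
  rw [hcovP]
  apply le_depth
  · constructor
    · exact List.isChain_iff_pairwise.mpr
        ((chain_pairwise hL.1).sublist List.filter_sublist)
    · intro γ hγ
      exact hL.2 γ (List.mem_filter.mp hγ).1
  · exact List.getLast?_eq_getLast hPne

lemma exists_chain_of_comparable :
    ∀ (n : ℕ) (F : Finset (ℕ × ℕ)), F.card = n → F.Nonempty →
    (∀ A ∈ F, ∀ B ∈ F, A ≠ B → pgt A B ∨ pgt B A) →
    ∃ L : List (ℕ × ℕ), L.Chain' pgt ∧ (∀ γ ∈ L, γ ∈ F) ∧ L.length = F.card ∧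
      ∃ β ∈ F, L.getLast? = some β := by
  intro n
  induction n with
  | zero => intro F hc hne _; rw [Finset.card_eq_zero] at hc; subst hc; simp at hne
  | succ n ih =>
    intro F hc hne hcomp
    obtain ⟨A, hA, hmax⟩ := F.exists_max_image Prod.fst hne
    have hpgtA : ∀ B ∈ F, B ≠ A → pgt A B := by
      intro B hB hBA
      rcases hcomp A hA B hB (fun h => hBA h.symm) with h | h
      · exact h
      · exact absurd (hmax B hB) (not_le.mpr h.1)
    have hcard' : (F.erase A).card = n := by
      rw [Finset.card_erase_of_mem hA, hc]; rfl
    rcases Nat.eq_zero_or_pos n with rfl | hn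
    · refine ⟨[A], List.isChain_singleton A, by simpa using hA, by simp [hc], A, hA, by simp⟩
    · have hne' : (F.erase A).Nonempty := by
        rw [← Finset.one_le_card, hcard']; exact hn
      obtain ⟨L', hch', hmem', hlen', β, hβ, hlast'⟩ := ih (F.erase A) hcard' hne'
        (fun B hB C hC h => hcomp B (Finset.mem_of_mem_erase hB) C (Finset.mem_of_mem_erase hC) h)
      have hL'ne : L' ≠ [] := by
        intro h; rw [h] at hlen'; rw [hcard'] at hlen'; simp at hlen'; omega
      refine ⟨A :: L', ?_, ?_, ?_, β, Finset.mem_of_mem_erase hβ, ?_⟩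
      · show List.IsChain pgt (A :: L')
        rw [List.isChain_cons]
        refine ⟨fun y hy => ?_, hch'⟩
        have hyL : y ∈ L' := by
          cases L' with
          | nil => simp at hy
          | cons e M => simp at hy; subst hy; simp
        have hyF := hmem' y hyL
        exact hpgtA y (Finset.mem_of_mem_erase hyF) (Finset.ne_of_mem_erase hyF)
      · intro γ hγ
        rcases List.mem_cons.mp hγ with rfl | hγ
        · exact hA
        · exact Finset.mem_of_mem_erase (hmem' γ hγ)
      · simp only [List.length_cons, hlen', hcard', hc]
      · cases L' with
        | nil => exact absurd rfl hL'ne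
        | cons e M => rw [List.getLast?_cons_cons]; exact hlast'

/-- For a `pgt`-chain `L` contained in a monomial of `N(v)`, comparison of `toW` with
`x = toW v Sx` is equivalent to pointwise comparison of covering numbers. -/
lemma leI_toW_iff_cov {d : ℕ} {v x : Finset ℕ} (hvd : v.card = d) (hxd : x.card = d)
    {Sx : Finset (ℕ × ℕ)}
    (hSxcol : ∀ α ∈ Sx, α.2 ∈ v) (hSxrow : ∀ α ∈ Sx, α.1 ∉ v)
    (hSxlt : ∀ α ∈ Sx, α.2 < α.1)
    (hSxinj1 : Set.InjOn Prod.fst (Sx : Set (ℕ × ℕ)))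
    (hSxinj2 : Set.InjOn Prod.snd (Sx : Set (ℕ × ℕ)))
    (hSx : toW v Sx = x)
    {S : Multiset (ℕ × ℕ)} (hS : ∀ α ∈ S, inN d v α)
    {L : List (ℕ × ℕ)} (hch : L.Chain' pgt) (hmem : ∀ β ∈ L, β ∈ S) :
    leI (toW v L.toFinset) x ↔ ∀ t, cov L.toFinset t ≤ cov Sx t := by
  classical
  have hmem' : ∀ γ ∈ L.toFinset, γ ∈ S := fun γ hγ => hmem γ (List.mem_toFinset.mp hγ)
  have hcol : ∀ γ ∈ L.toFinset, γ.2 ∈ v := fun γ hγ => (hS γ (hmem' γ hγ)).2.2.2.2.2.1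
  have hrow : ∀ γ ∈ L.toFinset, γ.1 ∉ v := fun γ hγ => (hS γ (hmem' γ hγ)).2.2.2.2.1
  have hlt : ∀ γ ∈ L.toFinset, γ.2 < γ.1 := fun γ hγ => (hS γ (hmem' γ hγ)).2.2.2.2.2.2
  have hinj1 : Set.InjOn Prod.fst (L.toFinset : Set (ℕ × ℕ)) := by
    intro A hA B hB heq
    by_contra hne
    have hA' : A ∈ L := List.mem_toFinset.mp (Finset.mem_coe.mp hA)
    have hB' : B ∈ L := List.mem_toFinset.mp (Finset.mem_coe.mp hB)
    rcases pairwise_mem_or (chain_pairwise hch) hA' hB' hne with h | h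
    · exact ne_of_gt h.1 heq
    · exact ne_of_lt h.1 heq
  have hinj2 : Set.InjOn Prod.snd (L.toFinset : Set (ℕ × ℕ)) := by
    intro A hA B hB heq
    by_contra hne
    have hA' : A ∈ L := List.mem_toFinset.mp (Finset.mem_coe.mp hA)
    have hB' : B ∈ L := List.mem_toFinset.mp (Finset.mem_coe.mp hB)
    rcases pairwise_mem_or (chain_pairwise hch) hA' hB' hne with h | h
    · exact ne_of_lt h.2 heq
    · exact ne_of_gt h.2 heq
  have hcard : (toW v L.toFinset).card = x.card := by
    rw [card_toW hcol hrow hinj1 hinj2, hvd, hxd]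
  rw [leI_iff_cnt hcard]
  constructor
  · intro h t
    have ht := h t
    rw [cnt_toW hcol hrow hlt hinj1 hinj2, ← hSx,
      cnt_toW hSxcol hSxrow hSxlt hSxinj1 hSxinj2] at ht
    omega
  · intro h t
    have ht := h t
    rw [cnt_toW hcol hrow hlt hinj1 hinj2, ← hSx,
      cnt_toW hSxcol hSxrow hSxlt hSxinj1 hSxinj2]
    omega

end OG

open OG in
/-- characterization of domination via elements of `𝔖_x` of at least
the same depth. -/
theorem stmt18 (d : ℕ) (hd : 0 < d) (v : Finset ℕ) (hv : v ∈ Iset d)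
    (S : Multiset (ℕ × ℕ)) (hS : ∀ α ∈ S, inN d v α)
    (x : Finset ℕ) (hx : x ∈ Idn d) (hvx : leI v x)
    (Sx : Finset (ℕ × ℕ)) (hdist : Distinguished d v Sx) (hSx : toW v Sx = x) :
    Dominates d v x S ↔
      ∀ α ∈ S, ∃ β ∈ Sx, β.2 ≤ α.2 ∧ α.1 ≤ β.1 ∧
        depth S α ≤ depth (Sx.val) β := by
  classical
  have hvd : v.card = d := hv.1.1
  have hxd : x.card = d := hx.1
  obtain ⟨hSxN, hSxd⟩ := hdist
  have hSxcol : ∀ α ∈ Sx, α.2 ∈ v := fun α h => (hSxN α h).2.2.2.2.2.1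
  have hSxrow : ∀ α ∈ Sx, α.1 ∉ v := fun α h => (hSxN α h).2.2.2.2.1
  have hSxlt : ∀ α ∈ Sx, α.2 < α.1 := fun α h => (hSxN α h).2.2.2.2.2.2
  have hSxinj1 : Set.InjOn Prod.fst (Sx : Set (ℕ × ℕ)) := by
    intro A hA B hB heq
    by_contra hne
    exact (hSxd A (Finset.mem_coe.mp hA) B (Finset.mem_coe.mp hB) hne).1 heq
  have hSxinj2 : Set.InjOn Prod.snd (Sx : Set (ℕ × ℕ)) := by
    intro A hA B hB heq
    by_contra hne
    exact (hSxd A (Finset.mem_coe.mp hA) B (Finset.mem_coe.mp hB) hne).2.1 heq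
  constructor
  · -- Dominates → depth condition
    intro hdom α hα
    have hαN := hS α hα
    have hα21 : α.2 < α.1 := hαN.2.2.2.2.2.2
    obtain ⟨L, hL, hlast, hlen⟩ := depth_attained hα
    have hk1 : 1 ≤ depth S α := one_le_depth hα
    have hcovSx : ∀ t, α.2 < t → t ≤ α.1 → depth S α ≤ cov Sx t := by
      intro t ht1 ht2
      have hcovL : cov L.toFinset t = depth S α := by
        rw [cov, Finset.filter_true_of_mem ?hall, List.toFinset_card_of_nodup (chain_nodup hL.1),
          hlen]
        case hall =>
          intro γ hγ
          rw [List.mem_toFinset] at hγ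
          rcases pairwise_rel_getLast (chain_pairwise hL.1) hlast hγ with rfl | hrel
          · exact ⟨ht1, ht2⟩
          · exact ⟨lt_trans hrel.2 ht1, le_trans ht2 (le_of_lt hrel.1)⟩
      have hcmp := (leI_toW_iff_cov hvd hxd hSxcol hSxrow hSxlt hSxinj1 hSxinj2 hSx hS
        hL.1 hL.2).mp (hdom L hL.1 hL.2) t
      omega
    set F := Sx.filter (fun β => β.2 ≤ α.2 ∧ α.1 ≤ β.1) with hFdef
    have hsubF : ∀ t, α.2 < t → t ≤ α.1 →
        (∀ β' ∈ Sx, β'.2 < t → t ≤ β'.1 → β' ∈ F) → depth S α ≤ F.card := by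
      intro t ht1 ht2 hsub
      have h1 : Sx.filter (fun β => β.2 < t ∧ t ≤ β.1) ⊆ F := by
        intro β hβ
        rw [Finset.mem_filter] at hβ
        exact hsub β hβ.1 hβ.2.1 hβ.2.2
      calc depth S α ≤ cov Sx t := hcovSx t ht1 ht2
        _ ≤ F.card := Finset.card_le_card h1
    have hkF : depth S α ≤ F.card := by
      set R := Sx.filter (fun β => α.2 < β.2 ∧ β.2 < α.1 ∧ α.1 ≤ β.1) with hRdef
      rcases R.eq_empty_or_nonempty with hRe | hRne
      · apply hsubF α.1 hα21 le_rfl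
        intro β' hβ' h1 h2
        by_cases hc : β'.2 ≤ α.2
        · exact Finset.mem_filter.mpr ⟨hβ', hc, h2⟩
        · exfalso
          have : β' ∈ R := Finset.mem_filter.mpr ⟨hβ', by omega, h1, h2⟩
          rw [hRe] at this
          simp at this
      · obtain ⟨ρ, hρR, hρmin⟩ := R.exists_min_image Prod.snd hRne
        obtain ⟨hρSx, hρ1, hρ2, hρ3⟩ := Finset.mem_filter.mp hρR
        apply hsubF ρ.2 hρ1 (le_of_lt hρ2)
        intro β' hβ' h1 h2
        have hne : β' ≠ ρ := by
          intro h
          rw [h] at h1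
          exact lt_irrefl _ h1
        have h31 : α.1 ≤ β'.1 := by
          by_contra hcon
          push_neg at hcon
          have hlt2 : β'.1 < ρ.1 := lt_of_lt_of_le hcon hρ3
          rcases (hSxd ρ hρSx β' hβ' hne.symm).2.2 hlt2 with h | h <;> omega
        have h32 : β'.2 ≤ α.2 := by
          by_contra hcon
          push_neg at hcon
          have hβ'R : β' ∈ R := Finset.mem_filter.mpr ⟨hβ', hcon, lt_trans h1 hρ2, h31⟩
          have := hρmin β' hβ'R
          omega
        exact Finset.mem_filter.mpr ⟨hβ', h32, h31⟩
    have hFne : F.Nonempty := Finset.card_pos.mp (lt_of_lt_of_le hk1 hkF)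
    have hcomp : ∀ A ∈ F, ∀ B ∈ F, A ≠ B → pgt A B ∨ pgt B A := by
      intro A hA B hB hne
      obtain ⟨hASx, hA2, hA1⟩ := Finset.mem_filter.mp hA
      obtain ⟨hBSx, hB2, hB1⟩ := Finset.mem_filter.mp hB
      have h1 := (hSxd A hASx B hBSx hne).1
      rcases lt_or_gt_of_ne h1 with h | h
      · rcases (hSxd B hBSx A hASx (Ne.symm hne)).2.2 h with hx | hx
        · exfalso; omega
        · exact Or.inr ⟨h, hx⟩
      · rcases (hSxd A hASx B hBSx hne).2.2 h with hx | hx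
        · exfalso; omega
        · exact Or.inl ⟨h, hx⟩
    obtain ⟨Lc, hLcch, hLcmem, hLclen, β, hβF, hLclast⟩ :=
      exists_chain_of_comparable F.card F rfl hFne hcomp
    obtain ⟨hβSx, hβ2, hβ1⟩ := Finset.mem_filter.mp hβF
    refine ⟨β, hβSx, hβ2, hβ1, ?_⟩
    have hdepβ : Lc.length ≤ depth Sx.val β :=
      le_depth ⟨hLcch, fun γ hγ =>
        Finset.mem_val.mpr (Finset.mem_filter.mp (hLcmem γ hγ)).1⟩ hLclast
    rw [hLclen] at hdepβ
    omega
  · -- depth condition → Dominates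
    intro hyp L hch hmem
    rw [leI_toW_iff_cov hvd hxd hSxcol hSxrow hSxlt hSxinj1 hSxinj2 hSx hS hch hmem]
    intro t
    rcases Nat.eq_zero_or_pos (cov L.toFinset t) with h0 | hpos
    · rw [h0]
      exact Nat.zero_le _
    · obtain ⟨α, hαL, h1, h2, h3⟩ := exists_deep_of_cov ⟨hch, hmem⟩ hpos
      obtain ⟨β, hβSx, hb2, hb1, hdep⟩ := hyp α (hmem α hαL)
      have h4 : depth Sx.val β ≤ cov Sx t :=
        depth_le_cov (lt_of_le_of_lt hb2 h1) (le_trans h2 hb1)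
      omega
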